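/- Let k ≥ 1 and n ≥ 1, and let u and v be words of length n over Σ_k. Then lso(u,v) + lso(v,u) ≤ 4n/3. -/
import Mathlib


open Classical Finset Filter

/-- A border of `w`: a non-empty word that is both a proper prefix and a suffix of `w`. -/
def IsBorder {k : ℕ} (w b : List (Fin k)) : Prop :=
  b ≠ [] ∧ b ≠ w ∧ b <+: w ∧ b <:+ w

/-- A word is unbordered if it has no border. -/
def Unbordered {k : ℕ} (w : List (Fin k)) : Prop :=
  ∀ b, ¬ IsBorder w b

/-- A right-border of `(u,v)`: a non-empty proper suffix of `u` that is a proper prefix of `v`. -/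
def IsRightBorder {k : ℕ} (u v b : List (Fin k)) : Prop :=
  b ≠ [] ∧ b <:+ u ∧ b ≠ u ∧ b <+: v ∧ b ≠ v

/-- A left-border of `(u,v)`: a non-empty proper prefix of `u` that is a proper suffix of `v`. -/
def IsLeftBorder {k : ℕ} (u v b : List (Fin k)) : Prop :=
  b ≠ [] ∧ b <+: u ∧ b ≠ u ∧ b <:+ v ∧ b ≠ v

def MutuallyBordered {k : ℕ} (u v : List (Fin k)) : Prop :=
  (∃ b, IsRightBorder u v b) ∧ (∃ b, IsLeftBorder u v b)

def MutuallyUnbordered {k : ℕ} (u v : List (Fin k)) : Prop :=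
  (¬ ∃ b, IsRightBorder u v b) ∧ (¬ ∃ b, IsLeftBorder u v b)

def RightBordered {k : ℕ} (u v : List (Fin k)) : Prop :=
  (∃ b, IsRightBorder u v b) ∧ (¬ ∃ b, IsLeftBorder u v b)

/-- `lso u v`: the length of the shortest right-border of `(u,v)`, or `0` if there is none. -/
noncomputable def lso {k : ℕ} (u v : List (Fin k)) : ℕ :=
  sInf {m | ∃ b : List (Fin k), IsRightBorder u v b ∧ b.length = m}

def IsShortestRightBorder {k : ℕ} (u v b : List (Fin k)) : Prop :=
  IsRightBorder u v b ∧ ∀ b', IsRightBorder u v b' → b.length ≤ b'.length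

def IsShortestLeftBorder {k : ℕ} (u v b : List (Fin k)) : Prop :=
  IsLeftBorder u v b ∧ ∀ b', IsLeftBorder u v b' → b.length ≤ b'.length

/-- The finite set of all length-`n` words over `Σ_k`. -/
def Words (k n : ℕ) : Finset (List (Fin k)) :=
  (Finset.univ : Finset (Fin n → Fin k)).image List.ofFn

/-- `UB k n`: the number of unbordered words of length `n` over `Σ_k`. -/
noncomputable def UB (k n : ℕ) : ℕ :=
  ((Words k n).filter Unbordered).card

/-- `M k n`: the number of mutually bordered pairs of length-`n` words over `Σ_k`. -/
noncomputable def M (k n : ℕ) : ℕ :=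
  ((Words k n ×ˢ Words k n).filter (fun p => MutuallyBordered p.1 p.2)).card

/-- `R k n`: the number of right-bordered pairs of length-`n` words over `Σ_k`. -/
noncomputable def R (k n : ℕ) : ℕ :=
  ((Words k n ×ˢ Words k n).filter (fun p => RightBordered p.1 p.2)).card

/-- `U k n`: the number of mutually unbordered pairs of length-`n` words over `Σ_k`. -/
noncomputable def U (k n : ℕ) : ℕ :=
  ((Words k n ×ˢ Words k n).filter (fun p => MutuallyUnbordered p.1 p.2)).card

/-- `G u v m`: the number of unbordered words of length `m` over `Σ_k` having
`u` as a prefix and `v` as a suffix. -/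
noncomputable def G {k : ℕ} (u v : List (Fin k)) (m : ℕ) : ℕ :=
  ((Words k m).filter (fun w => Unbordered w ∧ u <+: w ∧ v <:+ w)).card

lemma key {k n : ℕ} {u v b c : List (Fin k)} (hu : u.length = n) (hv : v.length = n)
    (hb : IsRightBorder u v b) (hc : IsRightBorder v u c)
    (hmin : ∀ d, IsRightBorder u v d → b.length ≤ d.length)
    (hqp : c.length ≤ b.length)
    (hbig : 4 * n + 1 ≤ 3 * (b.length + c.length)) : False := by
  obtain ⟨hbne, hbsu, hbnu, hbpv, hbnv⟩ := hb
  obtain ⟨hcne, hcsv, hcnv, hcpu, hcnu⟩ := hc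
  set p := b.length with hp
  set q := c.length with hq
  have hqpos : 1 ≤ q := List.length_pos_iff.mpr hcne
  have hpn : p < n := by
    rcases lt_or_eq_of_le (hu ▸ hbsu.length_le) with h | h
    · exact h
    · exact absurd (hbsu.eq_of_length (by omega)) hbnu
  have hqn : q < n := by
    rcases lt_or_eq_of_le (hv ▸ hcsv.length_le) with h | h
    · exact h
    · exact absurd (hcsv.eq_of_length (by omega)) hcnv
  set t := p + q - n with ht
  set s := 2 * t - q with hs
  have ht1 : 1 ≤ t := by omega
  have hs1 : 1 ≤ s := by omega
  have hst : s ≤ t := by omega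
  have htq : t < q := by omega
  have htp : t < p := by omega
  -- decompositions
  have hbu : b = u.drop (n - p) := by
    have := List.suffix_iff_eq_drop.mp hbsu; rwa [hu] at this
  have hbv : b = v.take p := List.prefix_iff_eq_take.mp hbpv
  have hcu : c = u.take q := List.prefix_iff_eq_take.mp hcpu
  have hcv : c = v.drop (n - q) := by
    have := List.suffix_iff_eq_drop.mp hcsv; rwa [hv] at this
  -- (1) b.take t = c.drop (q - t)
  have e1 : b.take t = c.drop (q - t) := by
    rw [hbu, hcu, List.drop_take]
    have h1 : q - (q - t) = t := by omega
    have h2 : q - t = n - p := by omega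
    rw [h1, h2]
  -- (2) b.drop (p - t) = c.take t
  have e2 : b.drop (p - t) = c.take t := by
    rw [hbv, hcv, List.drop_take]
    have h1 : p - (p - t) = t := by omega
    have h2 : p - t = n - q := by omega
    rw [h1, h2]
  -- (3) (c.drop (q - t)).take s = (c.take t).drop (t - s)
  have e3 : (c.drop (q - t)).take s = (c.take t).drop (t - s) := by
    rw [List.drop_take]
    have h1 : t - (t - s) = s := by omega
    have h2 : t - s = q - t := by omega
    rw [h1, h2]
  -- main equality: b.take s = b.drop (p - s)
  have emain : b.take s = b.drop (p - s) := by
    calc b.take s = (b.take t).take s := by rw [List.take_take, min_eq_left hst]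
    _ = (c.drop (q - t)).take s := by rw [e1]
    _ = (c.take t).drop (t - s) := e3
    _ = (b.drop (p - t)).drop (t - s) := by rw [e2]
    _ = b.drop (p - s) := by rw [List.drop_drop]; congr 1; omega
  -- d is a shorter right border
  set d := b.take s with hd
  have hdl : d.length = s := by
    rw [hd, List.length_take]; omega
  have : IsRightBorder u v d := by
    refine ⟨?_, ?_, ?_, ?_, ?_⟩
    · intro h; rw [h] at hdl; simp at hdl; omega
    · show d <:+ u; rw [emain]; exact (List.drop_suffix _ _).trans hbsu
    · intro h; rw [h, hu] at hdl; omega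
    · exact (List.take_prefix _ _).trans hbpv
    · intro h; rw [h, hv] at hdl; omega
  have := hmin d this
  omega

lemma lso_le {k : ℕ} {u v : List (Fin k)} : lso u v ≤ u.length := by
  rcases Set.eq_empty_or_nonempty {m | ∃ b : List (Fin k), IsRightBorder u v b ∧ b.length = m} with h | h
  · rw [lso, h, Nat.sInf_empty]; exact Nat.zero_le _
  · obtain ⟨b, hb, hl⟩ := Nat.sInf_mem h
    rw [lso, ← hl]
    exact hb.2.1.length_le

lemma lso_exists {k : ℕ} {u v : List (Fin k)} (h : lso u v ≠ 0) :
    ∃ b, IsRightBorder u v b ∧ b.length = lso u v := by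
  rcases Set.eq_empty_or_nonempty {m | ∃ b : List (Fin k), IsRightBorder u v b ∧ b.length = m} with he | he
  · exfalso; apply h; rw [lso, he, Nat.sInf_empty]
  · exact Nat.sInf_mem he

lemma lso_min {k : ℕ} {u v d : List (Fin k)} (h : IsRightBorder u v d) :
    lso u v ≤ d.length :=
  Nat.sInf_le ⟨d, h, rfl⟩

theorem stmt3 (k n : ℕ) (hk : 1 ≤ k) (hn : 1 ≤ n) (u v : List (Fin k))
    (hu : u.length = n) (hv : v.length = n) :
    3 * (lso u v + lso v u) ≤ 4 * n := by
  by_cases h1 : lso u v = 0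
  · have := @lso_le k v u
    rw [hv] at this
    omega
  by_cases h2 : lso v u = 0
  · have := @lso_le k u v
    rw [hu] at this
    omega
  obtain ⟨b, hb, hbl⟩ := lso_exists h1
  obtain ⟨c, hc, hcl⟩ := lso_exists h2
  by_contra hcon
  have hbig : 4 * n + 1 ≤ 3 * (b.length + c.length) := by omega
  rcases le_total c.length b.length with hle | hle
  · exact key hu hv hb hc (fun d hd => hbl ▸ lso_min hd) hle hbig
  · exact key hv hu hc hb (fun d hd => hcl ▸ lso_min hd) hle (by omega)
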